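/- Let Ω be a nonempty finite set and J ⊆ M_Ω(ℝ) a linear subspace consisting of symmetric matrices and closed under the Jordan product A★B = (AB+BA)/2. If the operation ★ is associative on J, i.e. (x★y)★z = x★(y★z) for all x, y, z ∈ J, then x★y = x·y for all x, y ∈ J; in particular the elements of J pairwise commute under ordinary matrix multiplication. -/
import Mathlib


open Matrix

noncomputable section

namespace JordanPaper

open scoped Classical

variable {Ω : Type*}

/-- The adjacency matrix (over `F`) of a binary relation on `Ω`. -/
def adj (F : Type*) [Zero F] [One F] (c : Set (Ω × Ω)) : Matrix Ω Ω F :=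
  Matrix.of fun a b => if (a, b) ∈ c then 1 else 0

/-- The all-ones matrix. -/
def allOnes (F : Type*) [One F] : Matrix Ω Ω F :=
  Matrix.of fun _ _ => 1

/-- The diagonal relation `1_Δ` on a subset `Δ ⊆ Ω`. -/
def diagRel (Δ : Set Ω) : Set (Ω × Ω) := {p | p.1 = p.2 ∧ p.1 ∈ Δ}

/-- The transposed relation. -/
def transposeRel (c : Set (Ω × Ω)) : Set (Ω × Ω) := {p | (p.2, p.1) ∈ c}

/-- `outSet c α = c(α) = {β | (α,β) ∈ c}`. -/
def outSet (c : Set (Ω × Ω)) (α : Ω) : Set Ω := {β | (α, β) ∈ c}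

/-- A partition of `Ω × Ω` into nonempty pairwise disjoint classes. -/
def IsPartition (P : Set (Set (Ω × Ω))) : Prop :=
  (∀ c ∈ P, c.Nonempty) ∧ (∀ c ∈ P, ∀ d ∈ P, c ≠ d → c ∩ d = ∅) ∧ ⋃₀ P = Set.univ

/-- A partition of `Δ × Δ` into nonempty pairwise disjoint classes. -/
def IsPartitionOn (Δ : Set Ω) (P : Set (Set (Ω × Ω))) : Prop :=
  (∀ c ∈ P, c.Nonempty) ∧ (∀ c ∈ P, ∀ d ∈ P, c ≠ d → c ∩ d = ∅) ∧ ⋃₀ P = Δ ×ˢ Δ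

/-- A rainbow: a partition of `Ω × Ω` such that the diagonal is a union of classes
and the set of classes is closed under transposition. -/
def IsRainbow (P : Set (Set (Ω × Ω))) : Prop :=
  IsPartition P ∧
  (∀ c ∈ P, (c ∩ diagRel (Set.univ : Set Ω)).Nonempty → c ⊆ diagRel (Set.univ : Set Ω)) ∧
  (∀ c ∈ P, transposeRel c ∈ P)

/-- `|c(α) ∩ dᵀ(β)|`. -/
def cnum (c d : Set (Ω × Ω)) (α β : Ω) : ℕ :=
  (outSet c α ∩ outSet (transposeRel d) β).ncard

/-- `|c(α) ∩ dᵀ(β)| + |d(α) ∩ cᵀ(β)|`. -/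
def jnum (c d : Set (Ω × Ω)) (α β : Ω) : ℕ :=
  cnum c d α β + cnum d c α β

/-- The coherence (intersection-number) condition. -/
def IsCoherentCond (P : Set (Set (Ω × Ω))) : Prop :=
  ∀ c ∈ P, ∀ d ∈ P, ∀ f ∈ P, ∀ p ∈ f, ∀ q ∈ f,
    cnum c d (p : Ω × Ω).1 (p : Ω × Ω).2 = cnum c d (q : Ω × Ω).1 (q : Ω × Ω).2

/-- The Jordan (symmetrized intersection-number) condition. -/
def IsJordanCond (P : Set (Set (Ω × Ω))) : Prop :=
  ∀ c ∈ P, ∀ d ∈ P, ∀ f ∈ P, ∀ p ∈ f, ∀ q ∈ f,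
    jnum c d (p : Ω × Ω).1 (p : Ω × Ω).2 = jnum c d (q : Ω × Ω).1 (q : Ω × Ω).2

/-- A coherent configuration. -/
def IsCoherentConfig (P : Set (Set (Ω × Ω))) : Prop := IsRainbow P ∧ IsCoherentCond P

/-- A Jordan configuration. -/
def IsJordanConfig (P : Set (Set (Ω × Ω))) : Prop := IsRainbow P ∧ IsJordanCond P

/-- An association scheme on a subset `Δ` (homogeneous coherent configuration on `Δ`). -/
def IsAssocSchemeOn (Δ : Set Ω) (P : Set (Set (Ω × Ω))) : Prop :=
  IsPartitionOn Δ P ∧ diagRel Δ ∈ P ∧ (∀ c ∈ P, transposeRel c ∈ P) ∧ IsCoherentCond P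

/-- The Jordan product of matrices. -/
def jmul (F : Type*) [Field F] [Fintype Ω] (x y : Matrix Ω Ω F) : Matrix Ω Ω F :=
  (2 : F)⁻¹ • (x * y + y * x)

/-- A coherent algebra. -/
def IsCoherentAlgebra (F : Type*) [Field F] [Fintype Ω] [DecidableEq Ω]
    (A : Submodule F (Matrix Ω Ω F)) : Prop :=
  (1 : Matrix Ω Ω F) ∈ A ∧ allOnes F ∈ A ∧ (∀ x ∈ A, xᵀ ∈ A) ∧
  (∀ x ∈ A, ∀ y ∈ A, x * y ∈ A) ∧ (∀ x ∈ A, ∀ y ∈ A, Matrix.hadamard x y ∈ A)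

/-- A coherent Jordan algebra. -/
def IsCoherentJAlgebra (F : Type*) [Field F] [Fintype Ω] [DecidableEq Ω]
    (A : Submodule F (Matrix Ω Ω F)) : Prop :=
  (1 : Matrix Ω Ω F) ∈ A ∧ allOnes F ∈ A ∧ (∀ x ∈ A, xᵀ ∈ A) ∧
  (∀ x ∈ A, ∀ y ∈ A, jmul F x y ∈ A) ∧ (∀ x ∈ A, ∀ y ∈ A, Matrix.hadamard x y ∈ A)

theorem statement19 {Ω : Type*} [Fintype Ω] [Nonempty Ω]
    (J : Submodule ℝ (Matrix Ω Ω ℝ))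
    (hsym : ∀ x ∈ J, xᵀ = x)
    (hclosed : ∀ x ∈ J, ∀ y ∈ J, jmul ℝ x y ∈ J)
    (hassoc : ∀ x ∈ J, ∀ y ∈ J, ∀ z ∈ J,
      jmul ℝ (jmul ℝ x y) z = jmul ℝ x (jmul ℝ y z)) :
    ∀ x ∈ J, ∀ y ∈ J, jmul ℝ x y = x * y ∧ x * y = y * x := by
  intro x hx y hy
  set C : Matrix Ω Ω ℝ := x * y - y * x with hC
  -- x commutes with C, from associativity applied to (x, x, y)
  have hcomm : x * C = C * x := by
    have h := hassoc x hx x hx y hy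
    simp only [jmul, smul_add, smul_smul, Matrix.mul_smul, Matrix.smul_mul, mul_add,
      add_mul] at h
    have h4 := congrArg (fun m => (4 : ℝ) • m) h
    simp only [smul_add, smul_smul] at h4
    norm_num at h4
    rw [hC, mul_sub, sub_mul, sub_eq_sub_iff_add_eq_add]
    simp only [mul_assoc] at h4 ⊢
    linear_combination (norm := abel) h4
  have hCt : Cᵀ = -C := by
    rw [hC, Matrix.transpose_sub, Matrix.transpose_mul, Matrix.transpose_mul,
      hsym x hx, hsym y hy]
    abel
  -- trace (Cᵀ * C) = 0
  have htr : Matrix.trace (Cᵀ * C) = 0 := by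
    have h1 : Matrix.trace (C * C) = 0 := by
      have e1 : Matrix.trace (x * y * C) = Matrix.trace (y * x * C) := by
        rw [Matrix.trace_mul_cycle, ← hcomm, Matrix.trace_mul_cycle]
      calc Matrix.trace (C * C) = Matrix.trace ((x * y) * C) - Matrix.trace ((y * x) * C) := by
            rw [hC, Matrix.sub_mul, Matrix.trace_sub]
        _ = 0 := by rw [e1, sub_self]
    rw [hCt, Matrix.neg_mul, Matrix.trace_neg, h1, neg_zero]
  -- hence C = 0
  have hC0 : C = 0 := by
    ext i j
    have h' : ∑ k, ∑ l, C l k * C l k = 0 := by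
      simpa [Matrix.trace, Matrix.mul_apply, Matrix.diag] using htr
    have h1 := (Finset.sum_eq_zero_iff_of_nonneg
      (fun k _ => Finset.sum_nonneg fun l _ => mul_self_nonneg _)).mp h' j (Finset.mem_univ _)
    have h2 := (Finset.sum_eq_zero_iff_of_nonneg
      (fun l _ => mul_self_nonneg _)).mp h1 i (Finset.mem_univ _)
    simpa using mul_self_eq_zero.mp h2
  have hxy : x * y = y * x := by
    have := sub_eq_zero.mp hC0
    exact this
  refine ⟨?_, hxy⟩
  rw [jmul, ← hxy, ← two_smul ℝ (x * y), smul_smul]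
  norm_num

end JordanPaper

end
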